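/- Let {X_ℓ, f_ℓ} and {Y_ℓ, g_ℓ} be inverse sequences of compact metric spaces with surjective continuous bonding functions. The following are equivalent: (1) there is a continuous surjection from varprojlim{X_ℓ, f_ℓ} onto varprojlim{Y_ℓ, g_ℓ}; (2) there are sequences (n_ℓ), (m_ℓ) of positive integers with m_{k+1} ≥ m_k, n_{k+1} > n_k, and m_k ≥ n_k for each k, and a sequence (H_ℓ) of upper semicontinuous set-valued functions H_ℓ : X_{m_ℓ} ⊸ Y_{n_ℓ} such that (a) the graph of each H_k is surjective, (b) for each positive integer k, each j ∈ {1, …, n_k}, each positive integer r > k and each x ∈ X_{m_r}, g_{j,n_r}(H_r(x)) ⊆ g_{j,n_k}(H_k(f_{m_k,m_r}(x))), and (c) for each positive integer j and each x ∈ varprojlim{X_ℓ, f_ℓ}, lim_{k→∞} diam(g_{j,n_k}(H_k(p_{m_k}(x)))) = 0. -/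
import Mathlib


open Metric Filter Set Function

/-- The inverse limit of an inverse sequence `{X n, f n}` of spaces with
single-valued bonding maps `f n : X (n+1) → X n`. -/
def invLim (X : ℕ → Type*) (f : ∀ n, X (n + 1) → X n) : Set (∀ n, X n) :=
  {x | ∀ n, x n = f n (x (n + 1))}

/-- The composite bonding map `f_{n,m} : X m → X n` for `n ≤ m`. -/
def bondMap {X : ℕ → Type*} (f : ∀ n, X (n + 1) → X n) {n m : ℕ} (h : n ≤ m) :
    X m → X n :=
  Nat.leRecOn (C := fun k => X k → X n) h (fun {k} g => g ∘ f k) id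

/-- A set-valued function is upper semicontinuous (with nonempty closed values):
all of its values are nonempty closed sets and its graph is closed. -/
def IsUSC {A B : Type*} [TopologicalSpace A] [TopologicalSpace B] (F : A → Set B) : Prop :=
  (∀ a, (F a).Nonempty) ∧ (∀ a, IsClosed (F a)) ∧ IsClosed {p : A × B | p.2 ∈ F p.1}

/-- The `T_{n,m}` transformation of a map between inverse limits:
`T_{n,m}(g)(x) = q_n (g (p_m ⁻¹ x))`. -/
def Ttrans {X Y : ℕ → Type*} {f : ∀ n, X (n + 1) → X n} {gs : ∀ n, Y (n + 1) → Y n}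
    (g : ↥(invLim X f) → ↥(invLim Y gs)) (n m : ℕ) (x : X m) : Set (Y n) :=
  {y | ∃ z : ↥(invLim X f), z.1 m = x ∧ (g z).1 n = y}

/-- A space has the fixed point property if every continuous self-map has a fixed point. -/
def HasFPP (Z : Type*) [TopologicalSpace Z] : Prop :=
  ∀ g : Z → Z, Continuous g → ∃ p, g p = p

section Aux

variable {X : ℕ → Type*} {f : ∀ n, X (n + 1) → X n}

theorem bondMap_self {n : ℕ} (h : n ≤ n) (x : X n) : bondMap f h x = x := by
  have := Nat.leRecOn_self (C := fun k => X k → X n)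
    (next := fun {k} (g : X k → X n) => g ∘ f k) (id : X n → X n)
  exact congrFun this x

theorem bondMap_succ {n m : ℕ} (h1 : n ≤ m) (h2 : n ≤ m + 1) (x : X (m + 1)) :
    bondMap f h2 x = bondMap f h1 (f m x) := by
  have := Nat.leRecOn_succ (C := fun k => X k → X n) h1 (h2 := h2)
    (next := fun {k} (g : X k → X n) => g ∘ f k) (id : X n → X n)
  exact congrFun this x

theorem bondMap_trans {n m p : ℕ} (h1 : n ≤ m) (h2 : m ≤ p) (h3 : n ≤ p) (x : X p) :
    bondMap f h3 x = bondMap f h1 (bondMap f h2 x) := by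
  induction p, h2 using Nat.le_induction with
  | base => rw [bondMap_self]
  | succ p' hp ih =>
    rw [bondMap_succ (h1.trans hp) h3, bondMap_succ hp, ih (h1.trans hp)]

theorem bondMap_one {n : ℕ} (h : n ≤ n + 1) (x : X (n + 1)) : bondMap f h x = f n x := by
  rw [bondMap_succ (le_refl n) h, bondMap_self]

theorem bondMap_continuous [∀ n, TopologicalSpace (X n)] (hfc : ∀ n, Continuous (f n))
    {n m : ℕ} (h : n ≤ m) : Continuous (bondMap f h) := by
  induction m, h using Nat.le_induction with
  | base => exact continuous_id.congr fun x => (bondMap_self _ x).symm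
  | succ p' hp ih =>
    exact (ih.comp (hfc p')).congr fun x => (bondMap_succ hp _ x).symm

theorem invLim_proj {z : ∀ n, X n} (hz : z ∈ invLim X f) {n m : ℕ} (h : n ≤ m) :
    z n = bondMap f h (z m) := by
  induction m, h using Nat.le_induction with
  | base => rw [bondMap_self]
  | succ p' hp ih =>
    rw [bondMap_succ hp, ← hz p', ih]

theorem exists_invLim_proj_eq (hfs : ∀ n, Surjective (f n)) {m : ℕ} (x : X m) :
    ∃ z : ↥(invLim X f), z.1 m = x := by
  classical
  let w : ∀ k, X (m + k) := fun k => Nat.rec x (fun k u => (hfs (m + k) u).choose) k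
  have hw : ∀ k, f (m + k) (w (k + 1)) = w k := fun k => (hfs (m + k) (w k)).choose_spec
  have hA : ∀ k (h : m ≤ m + k), bondMap f h (w k) = x := by
    intro k
    induction k with
    | zero => intro h; exact bondMap_self h x
    | succ k ih =>
      intro h
      rw [bondMap_succ (Nat.le_add_right m k) h, hw k, ih]
  refine ⟨⟨fun n => bondMap f (Nat.le_add_left n m) (w n), ?_⟩, hA m _⟩
  intro n
  show bondMap f (Nat.le_add_left n m) (w n)
      = f n (bondMap f (Nat.le_add_left (n + 1) m) (w (n + 1)))
  have e1 : bondMap f (Nat.le_add_left n m) (w n)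
      = bondMap f (show n ≤ m + (n + 1) by omega) (w (n + 1)) := by
    rw [bondMap_succ (Nat.le_add_left n m) (show n ≤ m + n + 1 by omega), hw n]
  have e2 : bondMap f (show n ≤ m + (n + 1) by omega) (w (n + 1))
      = f n (bondMap f (Nat.le_add_left (n + 1) m) (w (n + 1))) := by
    rw [bondMap_trans (Nat.le_succ n) (Nat.le_add_left (n + 1) m)
      (show n ≤ m + (n + 1) by omega), bondMap_one]
  rw [e1, e2]

theorem isClosed_invLim [∀ n, TopologicalSpace (X n)] [∀ n, T2Space (X n)]
    (hfc : ∀ n, Continuous (f n)) : IsClosed (invLim X f) := by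
  have : invLim X f = ⋂ n, {x : ∀ n, X n | x n = f n (x (n + 1))} := by
    ext x; simp [invLim, Set.mem_iInter]
  rw [this]
  exact isClosed_iInter fun n =>
    isClosed_eq (continuous_apply n) ((hfc n).comp (continuous_apply (n + 1)))

theorem isClosed_fiber {A B : Type*} [TopologicalSpace A] [TopologicalSpace B] {F : A → Set B}
    (h : IsClosed {p : A × B | p.2 ∈ F p.1}) (b : B) : IsClosed {a | b ∈ F a} :=
  h.preimage (continuous_id.prodMk continuous_const)

theorem usc_thickening {A B : Type*} [MetricSpace A] [CompactSpace A]
    [MetricSpace B] [CompactSpace B]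
    {F : A → Set B} (hgr : IsClosed {p : A × B | p.2 ∈ F p.1}) (a₀ : A)
    (hne : (F a₀).Nonempty) {ε : ℝ} (hε : 0 < ε) :
    ∃ δ > 0, ∀ a, dist a a₀ < δ → F a ⊆ thickening ε (F a₀) := by
  by_contra hcon
  push_neg at hcon
  have hS : ∀ n : ℕ, ∃ p : A × B, p.2 ∈ F p.1 ∧ dist p.1 a₀ ≤ 1 / (n + 1) ∧
      ε ≤ infDist p.2 (F a₀) := by
    intro n
    obtain ⟨a, ha, hnot⟩ := hcon (1 / (n + 1)) (by positivity)
    obtain ⟨b, hb, hbt⟩ := not_subset.1 hnot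
    refine ⟨(a, b), hb, ha.le, ?_⟩
    by_contra hlt
    exact hbt ((mem_thickening_iff_infDist_lt hne).2 (lt_of_not_ge hlt))
  set S : ℕ → Set (A × B) := fun n =>
    {p | p.2 ∈ F p.1 ∧ dist p.1 a₀ ≤ 1 / (n + 1) ∧ ε ≤ infDist p.2 (F a₀)} with hSdef
  have hcl : ∀ n, IsClosed (S n) := by
    intro n
    refine hgr.inter (IsClosed.inter ?_ ?_)
    · exact isClosed_le (continuous_fst.dist continuous_const) continuous_const
    · exact isClosed_le continuous_const ((continuous_infDist_pt _).comp continuous_snd)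
  have hsub : ∀ n, S (n + 1) ⊆ S n := by
    intro n p hp
    refine ⟨hp.1, hp.2.1.trans ?_, hp.2.2⟩
    have h1 : ((n:ℝ) + 1) ≤ ((n:ℝ) + 1 + 1) := by linarith
    calc (1:ℝ) / (↑(n+1) + 1) = 1 / ((n:ℝ) + 1 + 1) := by push_cast; ring_nf
      _ ≤ 1 / ((n:ℝ) + 1) := by
          apply one_div_le_one_div_of_le (by positivity) h1
  obtain ⟨p, hp⟩ := IsCompact.nonempty_iInter_of_sequence_nonempty_isCompact_isClosed
    S hsub (fun n => (hS n).imp fun p hp => hp) ((hcl 0).isCompact) hcl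
  simp only [Set.mem_iInter] at hp
  have h1 : dist p.1 a₀ ≤ 0 :=
    ge_of_tendsto tendsto_one_div_add_atTop_nhds_zero_nat
      (Eventually.of_forall fun n => (hp n).2.1)
  have h2 : p.1 = a₀ := by rwa [dist_le_zero] at h1
  have h3 : infDist p.2 (F a₀) = 0 := by
    have := (hp 0).1
    rw [h2] at this
    exact le_antisymm (by simpa using infDist_le_dist_of_mem (x := p.2) this) infDist_nonneg
  have := (hp 0).2.2
  rw [h3] at this
  exact absurd this (not_le.2 hε)

theorem exists_level [∀ n, MetricSpace (X n)] [∀ n, CompactSpace (X n)]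
    (hfc : ∀ n, Continuous (f n)) {E : Type*} [MetricSpace E]
    {φ : ↥(invLim X f) → E} (hφ : Continuous φ) {ε : ℝ} (hε : 0 < ε) :
    ∃ m, ∀ z z' : ↥(invLim X f), z.1 m = z'.1 m → dist (φ z) (φ z') ≤ ε := by
  by_contra hcon
  push_neg at hcon
  haveI : CompactSpace ↥(invLim X f) :=
    isCompact_iff_compactSpace.mp (isClosed_invLim hfc).isCompact
  set S : ℕ → Set (↥(invLim X f) × ↥(invLim X f)) := fun m =>
    {p | p.1.1 m = p.2.1 m ∧ ε ≤ dist (φ p.1) (φ p.2)} with hS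
  have hcl : ∀ m, IsClosed (S m) := fun m =>
    (isClosed_eq (((continuous_apply m).comp continuous_subtype_val).comp continuous_fst)
      (((continuous_apply m).comp continuous_subtype_val).comp continuous_snd)).inter
      (isClosed_le continuous_const ((hφ.comp continuous_fst).dist (hφ.comp continuous_snd)))
  have hsub : ∀ m, S (m + 1) ⊆ S m := by
    intro m p hp
    refine ⟨?_, hp.2⟩
    rw [p.1.2 m, p.2.2 m, hp.1]
  have hnon : ∀ m, (S m).Nonempty := by
    intro m
    obtain ⟨z, z', hzz, hd⟩ := hcon m
    exact ⟨(z, z'), hzz, hd.le⟩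
  obtain ⟨p, hp⟩ := IsCompact.nonempty_iInter_of_sequence_nonempty_isCompact_isClosed
    S hsub hnon ((hcl 0).isCompact) hcl
  simp only [Set.mem_iInter] at hp
  have heq : p.1 = p.2 := Subtype.ext (funext fun m => (hp m).1)
  have h2 := (hp 0).2
  rw [heq, dist_self] at h2
  exact absurd h2 (not_le.2 hε)

end Aux

theorem stmt10
    {X Y : ℕ → Type*} [∀ n, MetricSpace (X n)] [∀ n, CompactSpace (X n)]
    [∀ n, MetricSpace (Y n)] [∀ n, CompactSpace (Y n)]
    (f : ∀ n, X (n + 1) → X n) (gs : ∀ n, Y (n + 1) → Y n)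
    (hfc : ∀ n, Continuous (f n)) (hfs : ∀ n, Surjective (f n))
    (hgc : ∀ n, Continuous (gs n)) (hgs : ∀ n, Surjective (gs n)) :
    (∃ g : ↥(invLim X f) → ↥(invLim Y gs), Continuous g ∧ Surjective g) ↔
    (∃ ns ms : ℕ → ℕ, ∃ H : ∀ k, X (ms k) → Set (Y (ns k)),
      (∀ k, ms k ≤ ms (k + 1)) ∧ (∀ k, ns k < ns (k + 1)) ∧
      (∀ k, ns k ≤ ms k) ∧
      (∀ k, IsUSC (H k)) ∧
      (∀ k, ∀ y : Y (ns k), ∃ x : X (ms k), y ∈ H k x) ∧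
      (∀ k r : ℕ, k < r → ∀ (hnr : ns k ≤ ns r) (hmr : ms k ≤ ms r),
        ∀ j : ℕ, ∀ hj : j ≤ ns k, ∀ x : X (ms r),
          bondMap gs (hj.trans hnr) '' H r x ⊆
            bondMap gs hj '' H k (bondMap f hmr x)) ∧
      (∀ j : ℕ, ∀ z : ↥(invLim X f),
        Tendsto (fun k =>
            diam (if hj : j ≤ ns k then
              bondMap gs hj '' H k (z.1 (ms k))
            else (∅ : Set (Y j))))
          atTop (nhds (0 : ℝ)))) := by
  haveI compX : CompactSpace ↥(invLim X f) :=
    isCompact_iff_compactSpace.mp (isClosed_invLim hfc).isCompact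
  constructor
  · rintro ⟨g, hgcont, hgsurj⟩
    have hφ : ∀ j, Continuous fun z : ↥(invLim X f) => (g z).1 j :=
      fun j => (continuous_apply j).comp (continuous_subtype_val.comp hgcont)
    have hc : ∀ j k : ℕ, ∃ m, ∀ z z' : ↥(invLim X f), z.1 m = z'.1 m →
        dist ((g z).1 j) ((g z').1 j) ≤ 1 / (k + 1) :=
      fun j k => exists_level hfc (hφ j) (by positivity)
    choose c hcspec using hc
    set ms : ℕ → ℕ := fun k =>
      (Finset.range (k + 1)).sup (fun j => (Finset.range (k + 1)).sup (c j)) + k with hmsdef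
    have hmsk : ∀ k, k ≤ ms k := fun k => Nat.le_add_left k _
    have hmsmono : ∀ k, ms k ≤ ms (k + 1) := by
      intro k
      refine add_le_add ?_ k.le_succ
      refine le_trans (Finset.sup_mono_fun fun j _ => ?_)
        (Finset.sup_mono (Finset.range_subset_range.2 (by omega)))
      exact Finset.sup_mono (Finset.range_subset_range.2 (by omega))
    have hcms : ∀ j k, j ≤ k → c j k ≤ ms k := by
      intro j k hjk
      refine le_trans (le_trans (Finset.le_sup (f := c j)
        (Finset.mem_range.2 (by omega))) (Finset.le_sup (f := fun j =>
          (Finset.range (k + 1)).sup (c j)) (Finset.mem_range.2 (by omega))))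
        (Nat.le_add_right _ _)
    refine ⟨fun k => k, ms, fun k x =>
      {y : Y k | ∃ z : ↥(invLim X f), z.1 (ms k) = x ∧ (g z).1 k = y},
      hmsmono, fun k => Nat.lt_succ_self k, hmsk, ?_, ?_, ?_, ?_⟩
    · -- IsUSC
      intro k
      have hgraph : IsClosed {p : X (ms k) × Y k |
          p.2 ∈ {y : Y k | ∃ z : ↥(invLim X f), z.1 (ms k) = p.1 ∧ (g z).1 k = y}} := by
        have : {p : X (ms k) × Y k |
            p.2 ∈ {y : Y k | ∃ z : ↥(invLim X f), z.1 (ms k) = p.1 ∧ (g z).1 k = y}}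
            = Set.range (fun z : ↥(invLim X f) => (z.1 (ms k), (g z).1 k)) := by
          ext p
          simp only [Set.mem_setOf_eq, Set.mem_range, Prod.ext_iff]
        rw [this]
        exact (isCompact_range
          (((continuous_apply (ms k)).comp continuous_subtype_val).prodMk (hφ k))).isClosed
      refine ⟨?_, ?_, hgraph⟩
      · intro x
        obtain ⟨z, hz⟩ := exists_invLim_proj_eq hfs x
        exact ⟨(g z).1 k, z, hz, rfl⟩
      · intro x
        exact hgraph.preimage (continuous_const.prodMk continuous_id)
    · -- surjective graph
      intro k y
      obtain ⟨w, hw⟩ := exists_invLim_proj_eq hgs y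
      obtain ⟨z, hz⟩ := hgsurj w
      exact ⟨z.1 (ms k), z, rfl, by rw [hz, hw]⟩
    · -- compatibility
      intro k r hkr hnr hmr j hj x y hy
      obtain ⟨y0, ⟨z, hz1, hz2⟩, hy0⟩ := hy
      refine ⟨(g z).1 k, ⟨z, ?_, rfl⟩, ?_⟩
      · rw [← hz1]
        exact invLim_proj z.2 hmr
      · rw [← invLim_proj (g z).2 hj, ← hy0, ← hz2, ← invLim_proj (g z).2 (hj.trans hnr)]
    · -- diameter
      intro j z
      apply squeeze_zero' (Eventually.of_forall fun k => diam_nonneg)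
        (g := fun k : ℕ => 1 / ((k : ℝ) + 1)) ?_
        tendsto_one_div_add_atTop_nhds_zero_nat
      filter_upwards [eventually_ge_atTop j] with k hk
      rw [dif_pos hk]
      refine diam_le_of_forall_dist_le (by positivity) ?_
      rintro y1 ⟨u1, ⟨z1, hz1, hu1⟩, hb1⟩ y2 ⟨u2, ⟨z2, hz2, hu2⟩, hb2⟩
      have e1 : y1 = (g z1).1 j := by
        rw [← hb1, ← hu1, ← invLim_proj (g z1).2 hk]
      have e2 : y2 = (g z2).1 j := by
        rw [← hb2, ← hu2, ← invLim_proj (g z2).2 hk]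
      rw [e1, e2]
      apply hcspec j k
      have h1 : z1.1 (c j k) = bondMap f (hcms j k hk) (z1.1 (ms k)) :=
        invLim_proj z1.2 _
      have h2 : z2.1 (c j k) = bondMap f (hcms j k hk) (z2.1 (ms k)) :=
        invLim_proj z2.2 _
      rw [h1, h2, hz1, hz2]
  · rintro ⟨ns, ms, H, hms1, hns1, hnm, husc, hHsurj, hcompat, hdiam⟩
    have hmsmono : Monotone ms := monotone_nat_of_le_succ hms1
    have hnsmono : StrictMono ns := strictMono_nat_of_lt_succ hns1
    have hnsk : ∀ k, k ≤ ns k := fun k => hnsmono.le_apply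
    have hHcompact : ∀ k x, IsCompact (H k x) := fun k x => ((husc k).2.1 x).isCompact
    -- the nested family of candidate sets
    set D : ∀ (j k : ℕ), ↥(invLim X f) → Set (Y j) := fun j k z =>
      if h : j ≤ ns k then bondMap gs h '' H k (z.1 (ms k)) else univ with hDdef
    have hYne : ∀ (_ : ↥(invLim X f)) (j : ℕ), Nonempty (Y j) := by
      intro z j
      obtain ⟨y, _⟩ := (husc j).1 (z.1 (ms j))
      exact ⟨bondMap gs (hnsk j) y⟩
    have hDc : ∀ j k z, IsCompact (D j k z) := by
      intro j k z
      dsimp only [D]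
      split
      · exact (hHcompact _ _).image (bondMap_continuous hgc _)
      · exact isCompact_univ
    have hDne : ∀ j k z, (D j k z).Nonempty := by
      intro j k z
      dsimp only [D]
      split
      · exact ((husc k).1 _).image _
      · exact @Set.univ_nonempty _ (hYne z j)
    have hDanti : ∀ j z, Antitone fun k => D j k z := by
      intro j z
      apply antitone_nat_of_succ_le
      intro k
      by_cases h : j ≤ ns k
      · have h' : j ≤ ns (k + 1) := h.trans (hnsmono.monotone k.le_succ)
        dsimp only [D]
        rw [dif_pos h, dif_pos h']
        intro y hy
        have hc := hcompat k (k + 1) (Nat.lt_succ_self k)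
          (hnsmono.monotone k.le_succ) (hms1 k) j h (z.1 (ms (k + 1)))
        rw [← invLim_proj z.2 (hms1 k)] at hc
        exact hc hy
      · dsimp only [D]
        rw [dif_neg h]
        exact subset_univ _
    have hDdiam : ∀ j z, Tendsto (fun k => diam (D j k z)) atTop (nhds (0 : ℝ)) := by
      intro j z
      refine (hdiam j z).congr' ?_
      filter_upwards [eventually_ge_atTop j] with k hk
      have h : j ≤ ns k := hk.trans (hnsk k)
      dsimp only [D]
      rw [dif_pos h, dif_pos h]
    have key : ∀ (z : ↥(invLim X f)) (j : ℕ), (⋂ k, D j k z).Nonempty := by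
      intro z j
      exact IsCompact.nonempty_iInter_of_sequence_nonempty_isCompact_isClosed _
        (fun k => hDanti j z k.le_succ) (fun k => hDne j k z) (hDc j 0 z)
        (fun k => (hDc j k z).isClosed)
    set G : ↥(invLim X f) → ∀ j, Y j := fun z j => (key z j).some with hGdef
    have hGmem : ∀ z j k, G z j ∈ D j k z := fun z j k =>
      mem_iInter.1 (key z j).some_mem k
    have hunique : ∀ (z : ↥(invLim X f)) (j : ℕ) (y : Y j),
        (∀ k, y ∈ D j k z) → y = G z j := by
      intro z j y hy
      have hd : ∀ k, dist y (G z j) ≤ diam (D j k z) := fun k =>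
        dist_le_diam_of_mem (hDc j k z).isBounded (hy k) (hGmem z j k)
      have : dist y (G z j) ≤ 0 :=
        ge_of_tendsto (hDdiam j z) (Eventually.of_forall hd)
      exact dist_le_zero.1 this
    -- membership in one D implies in earlier ones
    have hGinv : ∀ z, G z ∈ invLim Y gs := by
      intro z j
      symm
      apply hunique
      intro k
      -- show at level r = max k (j+1), then use antitonicity
      set r := max k (j + 1) with hr
      have hjr : j + 1 ≤ ns r := (le_max_right k (j + 1)).trans (hnsk r)
      have hjr' : j ≤ ns r := (Nat.le_succ j).trans hjr
      refine hDanti j z (le_max_left k (j + 1)) ?_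
      have h2 := hGmem z (j + 1) r
      dsimp only [D] at h2 ⊢
      rw [dif_pos hjr] at h2
      rw [dif_pos hjr']
      obtain ⟨u, hu, hbu⟩ := h2
      refine ⟨u, hu, ?_⟩
      rw [bondMap_trans (Nat.le_succ j) hjr hjr' u, bondMap_one, hbu]
    have hGcont : ∀ j, Continuous fun z : ↥(invLim X f) => G z j := by
      intro j
      rw [continuous_iff_continuousAt]
      intro z
      rw [ContinuousAt, Metric.tendsto_nhds]
      intro ε hε
      obtain ⟨k, hk1, hk2⟩ :=
        (((hDdiam j z).eventually (gt_mem_nhds (show (0:ℝ) < ε/4 by linarith))).and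
          (eventually_ge_atTop j)).exists
      have hjk : j ≤ ns k := hk2.trans (hnsk k)
      have hψu := Metric.uniformContinuous_iff.1
        (CompactSpace.uniformContinuous_of_continuous
          (bondMap_continuous hgc hjk)) (ε/4) (by linarith)
      obtain ⟨δ1, hδ1, hψ⟩ := hψu
      obtain ⟨δ, hδ, hδspec⟩ := usc_thickening (husc k).2.2 (z.1 (ms k))
        ((husc k).1 _) hδ1
      have hcontc : Continuous fun z' : ↥(invLim X f) => z'.1 (ms k) :=
        (continuous_apply (ms k)).comp continuous_subtype_val
      have hnb := hcontc.continuousAt (x := z) (ball_mem_nhds (z.1 (ms k)) hδ)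
      filter_upwards [hnb] with z' hz'
      have h3 := hGmem z' j k
      have h4 := hGmem z j k
      dsimp only [D] at h3 h4
      rw [dif_pos hjk] at h3 h4
      obtain ⟨y', hy', hψy'⟩ := h3
      have hth : y' ∈ thickening δ1 (H k (z.1 (ms k))) :=
        hδspec _ (mem_ball.1 hz') hy'
      obtain ⟨y, hy, hyd⟩ := (hHcompact k _).exists_infDist_eq_dist ((husc k).1 _) y'
      have hyy' : dist y' y < δ1 := by
        rw [← hyd]
        exact (mem_thickening_iff_infDist_lt ((husc k).1 _)).1 hth
      have hd1 : dist (G z' j) (bondMap gs hjk y) < ε/4 := by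
        rw [← hψy']
        exact hψ hyy'
      have hd2 : dist (bondMap gs hjk y) (G z j) ≤ diam (D j k z) := by
        refine dist_le_diam_of_mem (hDc j k z).isBounded ?_ (hGmem z j k)
        dsimp only [D]
        rw [dif_pos hjk]
        exact mem_image_of_mem _ hy
      calc dist (G z' j) (G z j)
          ≤ dist (G z' j) (bondMap gs hjk y) + dist (bondMap gs hjk y) (G z j) :=
            dist_triangle _ _ _
        _ < ε/4 + ε/4 := by
            apply add_lt_add_of_lt_of_le hd1 (le_of_lt ?_) |>.trans_le (le_refl _)
            exact lt_of_le_of_lt hd2 hk1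
        _ < ε := by linarith
    refine ⟨fun z => ⟨G z, hGinv z⟩, ?_, ?_⟩
    · exact Continuous.subtype_mk (continuous_pi hGcont) _
    · intro w
      set F : ℕ → Set ↥(invLim X f) := fun k =>
        {z | w.1 (ns k) ∈ H k (z.1 (ms k))} with hFdef
      have hFcl : ∀ k, IsClosed (F k) := by
        intro k
        exact (isClosed_fiber (husc k).2.2 (w.1 (ns k))).preimage
          ((continuous_apply (ms k)).comp continuous_subtype_val)
      have hFne : ∀ k, (F k).Nonempty := by
        intro k
        obtain ⟨x, hx⟩ := hHsurj k (w.1 (ns k))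
        obtain ⟨z, hz⟩ := exists_invLim_proj_eq hfs x
        refine ⟨z, ?_⟩
        show w.1 (ns k) ∈ H k (z.1 (ms k))
        rw [hz]; exact hx
      have hFsub : ∀ k, F (k + 1) ⊆ F k := by
        intro k z hz
        have h1 : w.1 (ns k) = bondMap gs (hnsmono.monotone k.le_succ) (w.1 (ns (k + 1))) :=
          invLim_proj w.2 _
        have h2 := hcompat k (k + 1) (Nat.lt_succ_self k)
          (hnsmono.monotone k.le_succ) (hms1 k) (ns k) le_rfl (z.1 (ms (k + 1)))
        have h3 : w.1 (ns k) ∈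
            bondMap gs ((le_refl (ns k)).trans (hnsmono.monotone k.le_succ)) ''
              H (k + 1) (z.1 (ms (k + 1))) :=
          ⟨w.1 (ns (k + 1)), hz, h1.symm⟩
        obtain ⟨u, hu, hbu⟩ := h2 h3
        rw [bondMap_self] at hbu
        show w.1 (ns k) ∈ H k (z.1 (ms k))
        rw [invLim_proj z.2 (hms1 k), ← hbu]
        exact hu
      obtain ⟨z, hz⟩ := IsCompact.nonempty_iInter_of_sequence_nonempty_isCompact_isClosed
        F hFsub hFne ((hFcl 0).isCompact) hFcl
      simp only [Set.mem_iInter] at hz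
      refine ⟨z, ?_⟩
      apply Subtype.ext
      funext j
      show G z j = w.1 j
      symm
      apply hunique
      intro k
      dsimp only [D]
      split
      · rename_i h
        exact ⟨w.1 (ns k), hz k, (invLim_proj w.2 h).symm⟩
      · exact mem_univ _
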